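/- Let char(k) ≠ 2 and f ∈ k[X] of degree 2g+2 with non-square leading coefficient, g ≥ 1, K = k(X)(√f) with Y² = f. Then the element x = Y/X ∈ K satisfies: for every y = c + dY with c, d ∈ k[X], deg(N_{K/k(X)}(x - y)) ≥ 2g. Consequently the Euclidean minimum M(K) = max_x min_y deg(N(x-y)) equals 2g. -/

import Mathlib

open Polynomial

variable {k : Type} [Field k]

lemma aux_nonsq {f : k[X]} (hlead : ¬ ∃ c : k, c ^ 2 = f.leadingCoeff)
    {A B : k[X]} (hB : B ≠ 0) : A ^ 2 ≠ f * B ^ 2 := by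
  intro h
  have hf0 : f ≠ 0 := by rintro rfl; exact hlead ⟨0, by simp⟩
  have hA : A ≠ 0 := by
    rintro rfl
    exact (mul_ne_zero hf0 (pow_ne_zero 2 hB)) (by rw [← h]; simp)
  have hlc := congrArg leadingCoeff h
  rw [leadingCoeff_pow, leadingCoeff_mul, leadingCoeff_pow] at hlc
  refine hlead ⟨A.leadingCoeff / B.leadingCoeff, ?_⟩
  have hBlc : B.leadingCoeff ≠ 0 := leadingCoeff_ne_zero.mpr hB
  field_simp
  linear_combination hlc

lemma aux_nonsq_rat {f : k[X]} (hlead : ¬ ∃ c : k, c ^ 2 = f.leadingCoeff)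
    {a b : RatFunc k} (hab : ¬ (a = 0 ∧ b = 0)) :
    a ^ 2 - algebraMap k[X] (RatFunc k) f * b ^ 2 ≠ 0 := by
  intro h
  rw [sub_eq_zero] at h
  by_cases hb : b = 0
  · subst hb
    simp at h
    exact hab ⟨h, rfl⟩
  have h1 : (algebraMap k[X] (RatFunc k) (a.num * b.denom)) ^ 2
      = algebraMap k[X] (RatFunc k) (f * (b.num * a.denom) ^ 2) := by
    rw [map_mul, map_mul, map_pow, map_mul]
    have ha := RatFunc.num_div_denom a
    have hbd := RatFunc.num_div_denom b
    have hda := RatFunc.algebraMap_ne_zero a.denom_ne_zero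
    have hdb := RatFunc.algebraMap_ne_zero b.denom_ne_zero
    rw [← ha, ← hbd, div_pow, div_pow] at h
    field_simp at h
    linear_combination h
  have h2 : (a.num * b.denom) ^ 2 = f * (b.num * a.denom) ^ 2 := by
    have := RatFunc.algebraMap_injective k
    exact this (by rw [map_pow, h1])
  exact aux_nonsq hlead (mul_ne_zero (RatFunc.num_ne_zero hb) a.denom_ne_zero) h2

lemma aux_deg_lb {f : k[X]} (hlead : ¬ ∃ c : k, c ^ 2 = f.leadingCoeff)
    {A B : k[X]} (hB : B ≠ 0) :
    f.natDegree + 2 * B.natDegree ≤ (A ^ 2 - f * B ^ 2).natDegree := by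
  have hf0 : f ≠ 0 := by rintro rfl; exact hlead ⟨0, by simp⟩
  have hfb : (f * B ^ 2).natDegree = f.natDegree + 2 * B.natDegree := by
    rw [natDegree_mul hf0 (pow_ne_zero 2 hB), natDegree_pow]
  rcases lt_trichotomy (A ^ 2).natDegree (f * B ^ 2).natDegree with h | h | h
  · rw [natDegree_sub_eq_right_of_natDegree_lt h, hfb]
  · -- equal degrees: leading coefficients cannot cancel
    have hval : (A ^ 2 - f * B ^ 2).coeff (f * B ^ 2).natDegree
        = A.leadingCoeff ^ 2 - f.leadingCoeff * B.leadingCoeff ^ 2 := by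
      rw [coeff_sub]
      congr 1
      · simp [← h, coeff_natDegree, leadingCoeff_pow]
      · simp [coeff_natDegree, leadingCoeff_mul, leadingCoeff_pow]
    have hcoeff : (A ^ 2 - f * B ^ 2).coeff (f * B ^ 2).natDegree ≠ 0 := by
      rw [hval, sub_ne_zero]
      intro hc
      refine hlead ⟨A.leadingCoeff / B.leadingCoeff, ?_⟩
      have hBlc : B.leadingCoeff ≠ 0 := leadingCoeff_ne_zero.mpr hB
      field_simp
      linear_combination hc
    calc (f.natDegree + 2 * B.natDegree : ℕ) = (f * B ^ 2).natDegree := hfb.symm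
      _ ≤ _ := le_natDegree_of_ne_zero hcoeff
  · rw [natDegree_sub_eq_left_of_natDegree_lt h]
    rw [hfb] at h
    omega
    
lemma aux_intDeg_div {p q : k[X]} (hp : p ≠ 0) (hq : q ≠ 0) :
    (algebraMap k[X] (RatFunc k) p / algebraMap k[X] (RatFunc k) q).intDegree
      = (p.natDegree : ℤ) - q.natDegree := by
  have hpm := RatFunc.algebraMap_ne_zero (K := k) hp
  have hqm := RatFunc.algebraMap_ne_zero (K := k) hq
  have hu : algebraMap k[X] (RatFunc k) p / algebraMap k[X] (RatFunc k) q ≠ 0 :=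
    div_ne_zero hpm hqm
  have := RatFunc.intDegree_mul hu hqm
  rw [div_mul_cancel₀ _ hqm, RatFunc.intDegree_polynomial, RatFunc.intDegree_polynomial] at this
  omega

lemma aux_fracpart (a : RatFunc k) :
    a - algebraMap k[X] (RatFunc k) (a.num /ₘ a.denom) = 0 ∨
    (a - algebraMap k[X] (RatFunc k) (a.num /ₘ a.denom) ≠ 0 ∧
      (a - algebraMap k[X] (RatFunc k) (a.num /ₘ a.denom)).intDegree ≤ -1) := by
  set φ := algebraMap k[X] (RatFunc k)
  set r := a.num %ₘ a.denom with hr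
  set q := a.num /ₘ a.denom with hq
  have hmon := a.monic_denom
  have hden : φ a.denom ≠ 0 := RatFunc.algebraMap_ne_zero a.denom_ne_zero
  have ha : a * φ a.denom = φ a.num := by
    have h0 := RatFunc.num_div_denom a
    rw [div_eq_iff hden] at h0
    exact h0.symm
  have h1 : φ r = φ a.num - φ a.denom * φ q := by
    rw [← map_mul, ← map_sub]
    congr 1
    have := Polynomial.modByMonic_add_div a.num a.denom
    linear_combination this
  have key : a - φ q = φ r / φ a.denom := by
    rw [eq_div_iff hden, h1]
    linear_combination ha
  by_cases hr0 : r = 0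
  · left; rw [key, hr0, map_zero, zero_div]
  · right
    have hne : φ r / φ a.denom ≠ 0 :=
      div_ne_zero (RatFunc.algebraMap_ne_zero hr0) hden
    refine ⟨key ▸ hne, ?_⟩
    rw [key, aux_intDeg_div hr0 a.denom_ne_zero]
    have hlt : r.natDegree < a.denom.natDegree :=
      Polynomial.natDegree_lt_natDegree hr0 (Polynomial.degree_modByMonic_lt a.num hmon)
    omega

/-- In `K = k(X)(√f)` with `deg f = 2g+2` and non-square leading coefficient, the element
`x = Y/X` satisfies `deg N(x - y) ≥ 2g` for every `y = c + dY` with `c, d ∈ k[X]`;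
together with the upper bound this shows that the Euclidean minimum `M(K)` equals `2g`. -/
theorem stmt5 (k : Type) [Field k] (hchar : ringChar k ≠ 2) (g : ℕ) (hg : 1 ≤ g)
    (f : Polynomial k) (hf : f.natDegree = 2 * g + 2)
    (hlead : ¬ ∃ c : k, c ^ 2 = f.leadingCoeff)
    (K : Type) [Field K] [Algebra (RatFunc k) K]
    (Y : K)
    (hY : Y ^ 2 = algebraMap (RatFunc k) K (algebraMap (Polynomial k) (RatFunc k) f))
    (hrep : ∀ z : K, ∃! ab : RatFunc k × RatFunc k,
        z = algebraMap (RatFunc k) K ab.1 + algebraMap (RatFunc k) K ab.2 * Y)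
    (hnorm : ∀ a b : RatFunc k,
        Algebra.norm (RatFunc k)
            (algebraMap (RatFunc k) K a + algebraMap (RatFunc k) K b * Y)
          = a ^ 2 - (algebraMap (Polynomial k) (RatFunc k) f) * b ^ 2) :
    -- the element x = Y / X realizes the lower bound 2g :
    (∀ c d : Polynomial k,
        Y / algebraMap (RatFunc k) K RatFunc.X
            - (algebraMap (RatFunc k) K (algebraMap (Polynomial k) (RatFunc k) c)
              + algebraMap (RatFunc k) K (algebraMap (Polynomial k) (RatFunc k) d) * Y) ≠ 0 ∧
        2 * (g : ℤ) ≤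
          (Algebra.norm (RatFunc k)
            (Y / algebraMap (RatFunc k) K RatFunc.X
              - (algebraMap (RatFunc k) K (algebraMap (Polynomial k) (RatFunc k) c)
                + algebraMap (RatFunc k) K (algebraMap (Polynomial k) (RatFunc k) d) * Y))).intDegree) ∧
    -- and the Euclidean minimum is at most 2g, so M(K) = 2g :
    (∀ x : K, ∃ c d : Polynomial k,
      x = algebraMap (RatFunc k) K (algebraMap (Polynomial k) (RatFunc k) c)
            + algebraMap (RatFunc k) K (algebraMap (Polynomial k) (RatFunc k) d) * Y ∨
      (Algebra.norm (RatFunc k)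
          (x - (algebraMap (RatFunc k) K (algebraMap (Polynomial k) (RatFunc k) c)
            + algebraMap (RatFunc k) K (algebraMap (Polynomial k) (RatFunc k) d) * Y))).intDegree
        ≤ 2 * (g : ℤ)) := by
  set φ := algebraMap (Polynomial k) (RatFunc k) with hφ
  set ψ := algebraMap (RatFunc k) K with hψ
  have hf0 : f ≠ 0 := by rintro rfl; exact hlead ⟨0, by simp⟩
  have hφf : φ f ≠ 0 := RatFunc.algebraMap_ne_zero hf0
  have hnorm0 : Algebra.norm (RatFunc k) (0 : K) = 0 := by simpa using hnorm 0 0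
  constructor
  · -- lower bound for x = Y/X
    intro c d
    set b : RatFunc k := (RatFunc.X)⁻¹ - φ d with hbdef
    have hXne : (RatFunc.X : RatFunc k) ≠ 0 := RatFunc.X_ne_zero
    have hbne : b ≠ 0 := by
      intro h
      rw [hbdef, sub_eq_zero] at h
      have h1 : (1 : RatFunc k) = φ (Polynomial.X * d) := by
        rw [map_mul, RatFunc.algebraMap_X, ← h]
        field_simp
      have h2 : (1 : Polynomial k) = Polynomial.X * d := by
        apply RatFunc.algebraMap_injective k
        rw [map_one]; exact h1
      have hd0 : d ≠ 0 := by rintro rfl; simp at h2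
      have := congrArg Polynomial.natDegree h2
      rw [Polynomial.natDegree_one, Polynomial.natDegree_mul Polynomial.X_ne_zero hd0,
        Polynomial.natDegree_X] at this
      omega
    have helt : Y / ψ RatFunc.X - (ψ (φ c) + ψ (φ d) * Y)
        = ψ (-(φ c)) + ψ b * Y := by
      rw [hbdef, map_neg, map_sub, map_inv₀, div_eq_mul_inv]
      ring
    set B : Polynomial k := 1 - d * Polynomial.X with hBdef
    set A : Polynomial k := Polynomial.X * c with hAdef
    have hBne : B ≠ 0 := by
      intro h
      have := congrArg (Polynomial.eval 0) h
      simp [hBdef] at this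
    have hPne : A ^ 2 - f * B ^ 2 ≠ 0 := sub_ne_zero.mpr (aux_nonsq hlead hBne)
    have hX2 : (Polynomial.X : Polynomial k) ^ 2 ≠ 0 := pow_ne_zero 2 Polynomial.X_ne_zero
    have heq : (φ c) ^ 2 - φ f * b ^ 2 = φ (A ^ 2 - f * B ^ 2) / φ (Polynomial.X ^ 2) := by
      rw [eq_div_iff (RatFunc.algebraMap_ne_zero hX2)]
      simp only [hbdef, hAdef, hBdef, hφ, map_sub, map_mul, map_pow, map_one,
        RatFunc.algebraMap_X]
      field_simp
    have hdegP := aux_deg_lb hlead (A := A) hBne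
    have hNne : (-(φ c)) ^ 2 - φ f * b ^ 2 ≠ 0 := by
      apply aux_nonsq_rat hlead
      rintro ⟨-, h2⟩; exact hbne h2
    constructor
    · intro h0
      have h1 : Algebra.norm (RatFunc k) (ψ (-(φ c)) + ψ b * Y) = 0 := by
        rw [← helt, h0, hnorm0]
      rw [hnorm] at h1
      exact hNne h1
    · rw [helt, hnorm, neg_sq, heq,
        aux_intDeg_div hPne hX2, Polynomial.natDegree_pow, Polynomial.natDegree_X]
      rw [hf] at hdegP
      push_cast
      omega
  · -- upper bound
    intro x
    obtain ⟨⟨a, b⟩, hab, -⟩ := hrep x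
    simp only at hab
    set c0 := a.num /ₘ a.denom with hc0
    set d0 := b.num /ₘ b.denom with hd0
    refine ⟨c0, d0, ?_⟩
    set a' : RatFunc k := a - φ c0 with ha'
    set b' : RatFunc k := b - φ d0 with hb'
    have helt2 : x - (ψ (φ c0) + ψ (φ d0) * Y) = ψ a' + ψ b' * Y := by
      rw [hab, ha', hb', map_sub, map_sub]
      ring
    have hfa : a' = 0 ∨ (a' ≠ 0 ∧ a'.intDegree ≤ -1) := aux_fracpart a
    have hfb : b' = 0 ∨ (b' ≠ 0 ∧ b'.intDegree ≤ -1) := aux_fracpart b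
    rcases hfa with haz | hap
    · rcases hfb with hbz | hbp
      · left
        rw [ha'] at haz
        rw [hb'] at hbz
        rw [hab, sub_eq_zero.mp haz, sub_eq_zero.mp hbz]
      · right
        rw [helt2, hnorm, haz]
        have h2 : (0 : RatFunc k) ^ 2 - φ f * b' ^ 2 = -(φ f * b' ^ 2) := by ring
        rw [h2, RatFunc.intDegree_neg, RatFunc.intDegree_mul hφf (pow_ne_zero 2 hbp.1),
          RatFunc.intDegree_polynomial, sq, RatFunc.intDegree_mul hbp.1 hbp.1, hf]
        have := hbp.2
        push_cast
        omega
    · rcases hfb with hbz | hbp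
      · right
        rw [helt2, hnorm, hbz]
        have h2 : a' ^ 2 - φ f * (0 : RatFunc k) ^ 2 = a' * a' := by ring
        rw [h2, RatFunc.intDegree_mul hap.1 hap.1]
        have := hap.2
        omega
      · right
        rw [helt2, hnorm]
        have hNne : a' ^ 2 - φ f * b' ^ 2 ≠ 0 := by
          apply aux_nonsq_rat hlead
          rintro ⟨-, h2⟩; exact hbp.1 h2
        have hterm : -(φ f * b' ^ 2) ≠ 0 := by
          simp [hφf, pow_ne_zero, hbp.1]
        have hle := RatFunc.intDegree_add_le hterm (by rw [← sub_eq_add_neg]; exact hNne)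
        rw [← sub_eq_add_neg] at hle
        have h1 : (a' ^ 2).intDegree = 2 * a'.intDegree := by
          rw [sq, RatFunc.intDegree_mul hap.1 hap.1]; ring
        have h2 : (-(φ f * b' ^ 2)).intDegree = (f.natDegree : ℤ) + 2 * b'.intDegree := by
          rw [RatFunc.intDegree_neg, RatFunc.intDegree_mul hφf (pow_ne_zero 2 hbp.1),
            RatFunc.intDegree_polynomial, sq, RatFunc.intDegree_mul hbp.1 hbp.1]
          ring
        rw [h1, h2, hf] at hle
        have ha2 := hap.2
        have hb2 := hbp.2
        refine le_trans hle (max_le ?_ ?_) <;> push_cast <;> omega
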